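/- Let T be diagonal positive definite and Σ symmetric positive definite. The equation T^{−1}KΣ + ΣKT^{−1} = 2k_B·Id in the symmetric unknown K has the unique solution K = 2k_B ∫₀^∞ e^{−τTΣ} T² e^{−τΣT} dτ, and this K is symmetric. -/

import Mathlib

open Matrix MeasureTheory Set

lemma aux_exp_integrable {a : ℝ} (ha : 0 < a) :
    IntegrableOn (fun τ : ℝ => Real.exp (-(a * τ))) (Ioi 0) := by
  simpa [neg_mul] using exp_neg_integrableOn_Ioi 0 ha

lemma aux_exp_integral {a : ℝ} (ha : 0 < a) :
    ∫ τ in Ioi (0:ℝ), Real.exp (-(a * τ)) = a⁻¹ := by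
  have h := integral_comp_mul_left_Ioi (fun x => Real.exp (-x)) 0 ha
  simp only [mul_zero, integral_exp_neg_Ioi, smul_eq_mul, neg_zero, Real.exp_zero,
    mul_one] at h
  exact h

lemma aux_exp_conj {n : ℕ} (P Pinv A : Matrix (Fin n) (Fin n) ℝ)
    (h1 : P * Pinv = 1) (h2 : Pinv * P = 1) :
    NormedSpace.exp (P * A * Pinv) = P * NormedSpace.exp A * Pinv := by
  have hinv : P⁻¹ = Pinv := Matrix.inv_eq_right_inv h1
  have hu : IsUnit P := ⟨⟨P, Pinv, h1, h2⟩, rfl⟩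
  rw [← hinv, Matrix.exp_conj P A hu]

lemma aux_exp_diag {n : ℕ} (v : Fin n → ℝ) :
    NormedSpace.exp (Matrix.diagonal v) = Matrix.diagonal (fun i => Real.exp (v i)) := by
  rw [Matrix.exp_diagonal, Pi.exp_def, Real.exp_eq_exp_ℝ]

/-- The equation `T⁻¹KΣ + ΣKT⁻¹ = 2k_B·Id` in the symmetric unknown `K` has the
unique solution `K = 2k_B ∫₀^∞ e^{−τTΣ} T² e^{−τΣT} dτ`, and this `K` is symmetric. -/
theorem min_entropy_rate_gain
    (n : ℕ) (kB : ℝ) (hkB : 0 < kB)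
    (d : Fin n → ℝ) (hd : ∀ i, 0 < d i)
    (T : Matrix (Fin n) (Fin n) ℝ) (hT : T = Matrix.diagonal d)
    (S : Matrix (Fin n) (Fin n) ℝ) (hS : Sᵀ = S) (hSpd : S.PosDef)
    (K : Matrix (Fin n) (Fin n) ℝ)
    (hK : ∀ i j, K i j = 2 * kB *
      ∫ τ in Set.Ioi (0:ℝ),
        (NormedSpace.exp (-(τ • (T * S))) * (T * T) *
          NormedSpace.exp (-(τ • (S * T)))) i j) :
    Kᵀ = K ∧ T⁻¹ * K * S + S * K * T⁻¹ = (2 * kB) • (1 : Matrix (Fin n) (Fin n) ℝ) ∧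
      ∀ K' : Matrix (Fin n) (Fin n) ℝ, K'ᵀ = K' →
        T⁻¹ * K' * S + S * K' * T⁻¹ = (2 * kB) • (1 : Matrix (Fin n) (Fin n) ℝ) →
        K' = K := by
  classical
  obtain ⟨sd, hsd⟩ : ∃ sd : Fin n → ℝ, sd = fun i => Real.sqrt (d i) := ⟨_, rfl⟩
  have hsd_pos : ∀ i, 0 < sd i := fun i => hsd ▸ Real.sqrt_pos.mpr (hd i)
  have hsd_sq : ∀ i, sd i * sd i = d i := fun i => hsd ▸ Real.mul_self_sqrt (hd i).le
  obtain ⟨P, hP⟩ : ∃ P, P = Matrix.diagonal sd := ⟨_, rfl⟩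
  obtain ⟨Q, hQ⟩ : ∃ Q, Q = Matrix.diagonal (fun i => (sd i)⁻¹) := ⟨_, rfl⟩
  have hPP : P * P = T := by
    rw [hP, hT, Matrix.diagonal_mul_diagonal]
    exact congrArg Matrix.diagonal (funext fun i => hsd_sq i)
  have hPQ : P * Q = 1 := by
    rw [hP, hQ, Matrix.diagonal_mul_diagonal, ← Matrix.diagonal_one]
    exact congrArg Matrix.diagonal (funext fun i => mul_inv_cancel₀ (hsd_pos i).ne')
  have hQP : Q * P = 1 := by
    rw [hP, hQ, Matrix.diagonal_mul_diagonal, ← Matrix.diagonal_one]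
    exact congrArg Matrix.diagonal (funext fun i => inv_mul_cancel₀ (hsd_pos i).ne')
  have hQT : Q * T = P := by
    rw [hP, hQ, hT, Matrix.diagonal_mul_diagonal]
    refine congrArg Matrix.diagonal (funext fun i => ?_)
    rw [← hsd_sq i, inv_mul_cancel_left₀ (hsd_pos i).ne']
  have hTQ : T * Q = P := by
    rw [hP, hQ, hT, Matrix.diagonal_mul_diagonal]
    refine congrArg Matrix.diagonal (funext fun i => ?_)
    rw [← hsd_sq i, mul_inv_cancel_right₀ (hsd_pos i).ne']
  have hPt : Pᵀ = P := by rw [hP, Matrix.diagonal_transpose]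
  have hTt : Tᵀ = T := by rw [hT, Matrix.diagonal_transpose]
  -- the symmetrized matrix A
  obtain ⟨A, hA⟩ : ∃ A, A = P * S * P := ⟨_, rfl⟩
  have hSH : S.IsHermitian := by
    show Sᴴ = S
    ext i j
    simp only [Matrix.conjTranspose_apply, star_trivial]
    exact (congrFun (congrFun hS i) j : Sᵀ i j = S i j)
  have hAH : A.IsHermitian := by
    show Aᴴ = A
    rw [hA]
    simp only [Matrix.conjTranspose_mul, hSH.eq]
    have hPH : Pᴴ = P := by
      ext i j
      simp only [Matrix.conjTranspose_apply, star_trivial]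
      exact congrFun (congrFun hPt i) j
    rw [hPH, mul_assoc]
  have hApd : A.PosDef := by
    refine Matrix.posDef_iff_dotProduct_mulVec.mpr ⟨hAH, fun x hx => ?_⟩
    have hy : P *ᵥ x ≠ 0 := by
      intro h
      apply hx
      have hxx : Q *ᵥ (P *ᵥ x) = x := by
        rw [Matrix.mulVec_mulVec, hQP, Matrix.one_mulVec]
      rw [← hxx, h, Matrix.mulVec_zero]
    have key : dotProduct (star x) (A *ᵥ x)
        = dotProduct (star (P *ᵥ x)) (S *ᵥ (P *ᵥ x)) := by
      rw [hA, ← Matrix.mulVec_mulVec, ← Matrix.mulVec_mulVec, dotProduct_mulVec]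
      congr 1
      ext i
      simp [hP, Matrix.vecMul_diagonal, Matrix.mulVec_diagonal, mul_comm]
    rw [key]
    exact hSpd.dotProduct_mulVec_pos hy
  -- spectral decomposition of A
  obtain ⟨U, hU⟩ : ∃ U, U = (Matrix.IsHermitian.eigenvectorUnitary hAH :
      Matrix (Fin n) (Fin n) ℝ) := ⟨_, rfl⟩
  obtain ⟨lam, hlamdef⟩ : ∃ lam, lam = hAH.eigenvalues := ⟨_, rfl⟩
  have hlam : ∀ k, 0 < lam k := fun k => hlamdef ▸ hApd.eigenvalues_pos k
  have hsUU : star U = Uᵀ := by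
    ext i j; simp [Matrix.star_apply]
  have hU1 : U * Uᵀ = 1 := by
    rw [← hsUU, hU]
    exact Matrix.mem_unitaryGroup_iff.mp (Matrix.IsHermitian.eigenvectorUnitary hAH).2
  have hU2 : Uᵀ * U = 1 := by
    rw [← hsUU, hU]
    exact Matrix.mem_unitaryGroup_iff'.mp (Matrix.IsHermitian.eigenvectorUnitary hAH).2
  obtain ⟨Dm, hDm⟩ : ∃ Dm, Dm = Matrix.diagonal lam := ⟨_, rfl⟩
  have hspec : A = U * Dm * Uᵀ := by
    have h := hAH.spectral_theorem
    simp only [Unitary.conjStarAlgAut_apply, Unitary.coe_star] at h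
    rw [← hU, ← hlamdef, hsUU] at h
    rw [h, hDm]
    congr 2
  -- rewrite rules
  have rQP : ∀ X : Matrix (Fin n) (Fin n) ℝ, Q * (P * X) = X := fun X => by
    rw [← mul_assoc, hQP, one_mul]
  have rPQ : ∀ X : Matrix (Fin n) (Fin n) ℝ, P * (Q * X) = X := fun X => by
    rw [← mul_assoc, hPQ, one_mul]
  have rUUt : ∀ X : Matrix (Fin n) (Fin n) ℝ, U * (Uᵀ * X) = X := fun X => by
    rw [← mul_assoc, hU1, one_mul]
  have rUtU : ∀ X : Matrix (Fin n) (Fin n) ℝ, Uᵀ * (U * X) = X := fun X => by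
    rw [← mul_assoc, hU2, one_mul]
  have rQT : ∀ X : Matrix (Fin n) (Fin n) ℝ, Q * (T * X) = P * X := fun X => by
    rw [← mul_assoc, hQT]
  have rTQ : ∀ X : Matrix (Fin n) (Fin n) ℝ, T * (Q * X) = P * X := fun X => by
    rw [← mul_assoc, hTQ]
  have rPP : ∀ X : Matrix (Fin n) (Fin n) ℝ, P * (P * X) = T * X := fun X => by
    rw [← mul_assoc, hPP]
  have rPS : P * S = A * Q := by
    rw [hA, show P * S * P * Q = P * S * (P * Q) from by noncomm_ring, hPQ, mul_one]
  have rSP : S * P = Q * A := by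
    rw [hA, show Q * (P * S * P) = (Q * P) * (S * P) from by noncomm_ring, hQP, one_mul]
  have rPSX : ∀ X : Matrix (Fin n) (Fin n) ℝ, P * (S * X) = A * (Q * X) := fun X => by
    rw [← mul_assoc, rPS, mul_assoc]
  have rSPX : ∀ X : Matrix (Fin n) (Fin n) ℝ, S * (P * X) = Q * (A * X) := fun X => by
    rw [← mul_assoc, rSP, mul_assoc]
  -- the exponential of -(τ • A)
  have hexpA : ∀ τ : ℝ, NormedSpace.exp (-(τ • A))
      = U * Matrix.diagonal (fun k => Real.exp (-(τ * lam k))) * Uᵀ := by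
    intro τ
    have h1 : -(τ • A) = U * Matrix.diagonal (fun k => -(τ * lam k)) * Uᵀ := by
      have h2 : Matrix.diagonal (fun k => -(τ * lam k)) = -(τ • Dm) := by
        rw [hDm]
        ext i j
        by_cases h : i = j <;>
          simp [h, Matrix.diagonal_apply_eq, Matrix.diagonal_apply_ne]
      rw [h2, hspec]
      simp [Matrix.mul_smul, Matrix.smul_mul, Matrix.neg_mul, Matrix.mul_neg]
    rw [h1, aux_exp_conj U Uᵀ _ hU1 hU2, aux_exp_diag]
  have hTSA : T * S = P * A * Q := by
    rw [hA, show P * (P * S * P) * Q = (P * P) * S * (P * Q) from by noncomm_ring,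
      hPP, hPQ, mul_one]
  have hSTA : S * T = Q * A * P := by
    rw [hA, show Q * (P * S * P) * P = (Q * P) * S * (P * P) from by noncomm_ring,
      hQP, hPP, one_mul]
  have hexpTS : ∀ τ : ℝ, NormedSpace.exp (-(τ • (T * S)))
      = P * (U * Matrix.diagonal (fun k => Real.exp (-(τ * lam k))) * Uᵀ) * Q := by
    intro τ
    have h1 : -(τ • (T * S)) = P * (-(τ • A)) * Q := by
      rw [hTSA]
      simp [Matrix.mul_smul, Matrix.smul_mul, Matrix.neg_mul, Matrix.mul_neg]
    rw [h1, aux_exp_conj P Q _ hPQ hQP, hexpA]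
  have hexpST : ∀ τ : ℝ, NormedSpace.exp (-(τ • (S * T)))
      = Q * (U * Matrix.diagonal (fun k => Real.exp (-(τ * lam k))) * Uᵀ) * P := by
    intro τ
    have h1 : -(τ • (S * T)) = Q * (-(τ • A)) * P := by
      rw [hSTA]
      simp [Matrix.mul_smul, Matrix.smul_mul, Matrix.neg_mul, Matrix.mul_neg]
    rw [h1, aux_exp_conj Q P _ hQP hPQ, hexpA]
  -- the matrices B and M
  obtain ⟨B, hB⟩ : ∃ B, B = Uᵀ * T * U := ⟨_, rfl⟩
  obtain ⟨M, hM⟩ : ∃ M : Matrix (Fin n) (Fin n) ℝ,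
      M = Matrix.of (fun k l => B k l * (lam k + lam l)⁻¹) := ⟨_, rfl⟩
  have hlamsum : ∀ k l, lam k + lam l ≠ 0 := fun k l => (add_pos (hlam k) (hlam l)).ne'
  -- the integrand in closed form
  have hG : ∀ τ : ℝ, Matrix.diagonal (fun k => Real.exp (-(τ * lam k))) * B *
      Matrix.diagonal (fun k => Real.exp (-(τ * lam k)))
      = Matrix.of (fun k l => Real.exp (-((lam k + lam l) * τ)) * B k l) := by
    intro τ
    ext k l
    simp only [Matrix.mul_diagonal, Matrix.diagonal_mul, Matrix.of_apply]
    rw [show -((lam k + lam l) * τ) = -(τ * lam k) + -(τ * lam l) by ring, Real.exp_add]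
    ring
  have hintegrand : ∀ τ : ℝ,
      NormedSpace.exp (-(τ • (T * S))) * (T * T) * NormedSpace.exp (-(τ • (S * T)))
      = P * (U * (Matrix.of (fun k l => Real.exp (-((lam k + lam l) * τ)) * B k l)) * Uᵀ) * P := by
    intro τ
    rw [hexpTS τ, hexpST τ, ← hG τ, hB]
    simp only [mul_assoc, rQT, rTQ, rPP, rPQ]
  -- closed form of K
  have hKform : K = (2 * kB) • (P * (U * M * Uᵀ) * P) := by
    ext i j
    rw [hK i j]
    have hfun : ∀ τ : ℝ,
        (NormedSpace.exp (-(τ • (T * S))) * (T * T) *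
          NormedSpace.exp (-(τ • (S * T)))) i j
        = ∑ l, ∑ k, (sd i * U i k * B k l * Uᵀ l j * sd j) *
            Real.exp (-((lam k + lam l) * τ)) := by
      intro τ
      rw [hintegrand τ, hP, Matrix.mul_diagonal, Matrix.diagonal_mul]
      simp only [Matrix.mul_apply, Matrix.of_apply, Finset.sum_mul, Finset.mul_sum]
      refine Finset.sum_congr rfl fun l _ => Finset.sum_congr rfl fun k _ => by ring
    simp only [hfun]
    have hval : (∫ τ in Ioi (0:ℝ), ∑ l, ∑ k,
          (sd i * U i k * B k l * Uᵀ l j * sd j) * Real.exp (-((lam k + lam l) * τ)))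
        = ∑ l, ∑ k, (sd i * U i k * B k l * Uᵀ l j * sd j) * (lam k + lam l)⁻¹ := by
      rw [MeasureTheory.integral_finset_sum _ (fun l _ =>
        integrable_finset_sum _ (fun k _ =>
          ((aux_exp_integrable (add_pos (hlam k) (hlam l))).const_mul _)))]
      refine Finset.sum_congr rfl fun l _ => ?_
      rw [MeasureTheory.integral_finset_sum _ (fun k _ =>
        ((aux_exp_integrable (add_pos (hlam k) (hlam l))).const_mul _))]
      refine Finset.sum_congr rfl fun k _ => ?_
      rw [MeasureTheory.integral_const_mul, aux_exp_integral (add_pos (hlam k) (hlam l))]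
    rw [hval, Matrix.smul_apply, smul_eq_mul, hP, Matrix.mul_diagonal, Matrix.diagonal_mul,
      hM]
    simp only [Matrix.mul_apply, Matrix.of_apply, Finset.sum_mul, Finset.mul_sum]
    refine Finset.sum_congr rfl fun l _ => Finset.sum_congr rfl fun k _ => by ring
  -- symmetry of B and M
  have hBt : Bᵀ = B := by
    rw [hB]
    simp only [Matrix.transpose_mul, Matrix.transpose_transpose, hTt, mul_assoc]
  have hMt : Mᵀ = M := by
    rw [hM]
    ext k l
    simp only [Matrix.transpose_apply, Matrix.of_apply]
    have : B l k = B k l := congrFun (congrFun hBt k) l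
    rw [this, add_comm]
  -- goal 1 : symmetry of K
  have goal1 : Kᵀ = K := by
    rw [hKform, Matrix.transpose_smul]
    congr 1
    simp only [Matrix.transpose_mul, Matrix.transpose_transpose, hPt, hMt, mul_assoc]
  -- the Lyapunov identity
  have hMDm : M * Dm + Dm * M = B := by
    rw [hM, hDm]
    ext k l
    simp only [Matrix.add_apply, Matrix.mul_diagonal, Matrix.diagonal_mul, Matrix.of_apply]
    have h1 : lam k + lam l ≠ 0 := hlamsum k l
    have h2 : lam l + lam k ≠ 0 := hlamsum l k
    field_simp
    ring
  have hlyap : (U * M * Uᵀ) * A + A * (U * M * Uᵀ) = T := by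
    rw [hspec]
    have h1 : (U * M * Uᵀ) * (U * Dm * Uᵀ) + (U * Dm * Uᵀ) * (U * M * Uᵀ)
        = U * (M * Dm + Dm * M) * Uᵀ := by
      simp only [Matrix.mul_add, Matrix.add_mul, mul_assoc, rUtU]
    rw [h1, hMDm, hB]
    simp only [mul_assoc, rUUt]
    rw [hU1, mul_one]
  -- goal 2 : the Lyapunov equation
  have hTinv : T⁻¹ = Q * Q := by
    refine Matrix.inv_eq_right_inv ?_
    rw [← mul_assoc, hTQ, hPQ]
  have goal2 : T⁻¹ * K * S + S * K * T⁻¹ = (2 * kB) • (1 : Matrix (Fin n) (Fin n) ℝ) := by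
    rw [hKform, hTinv]
    have h1 : Q * Q * ((2 * kB) • (P * (U * M * Uᵀ) * P)) * S
        + S * ((2 * kB) • (P * (U * M * Uᵀ) * P)) * (Q * Q)
        = (2 * kB) • (Q * ((U * M * Uᵀ) * A + A * (U * M * Uᵀ)) * Q) := by
      simp only [Matrix.mul_smul, Matrix.smul_mul, ← smul_add]
      congr 1
      simp only [Matrix.mul_add, Matrix.add_mul, mul_assoc, rQP, rPQ, rPS, rSPX]
    rw [h1, hlyap, hQT, hPQ]
  refine ⟨goal1, goal2, ?_⟩
  -- uniqueness
  intro K' hK's hK'eq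
  have hsub : T⁻¹ * (K' - K) * S + S * (K' - K) * T⁻¹ = 0 := by
    have expand : T⁻¹ * (K' - K) * S + S * (K' - K) * T⁻¹
        = (T⁻¹ * K' * S + S * K' * T⁻¹) - (T⁻¹ * K * S + S * K * T⁻¹) := by noncomm_ring
    rw [expand, hK'eq, goal2, sub_self]
  obtain ⟨D, hDdef⟩ : ∃ D, D = K' - K := ⟨_, rfl⟩
  rw [← hDdef] at hsub
  obtain ⟨X, hX⟩ : ∃ X, X = Q * (D * Q) := ⟨_, rfl⟩
  have hXA : X * A + A * X = 0 := by
    have h0 : P * (T⁻¹ * D * S + S * D * T⁻¹) * P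
        = Q * (D * Q) * A + A * (Q * (D * Q)) := by
      rw [hTinv]
      simp only [Matrix.mul_add, Matrix.add_mul, mul_assoc, rPQ, rSP, rPSX, hQP, mul_one]
    rw [hsub, mul_zero, zero_mul] at h0
    rw [hX]
    exact h0.symm
  have hYeq : Uᵀ * (X * A + A * X) * U
      = (Uᵀ * (X * U)) * Dm + Dm * (Uᵀ * (X * U)) := by
    rw [hspec]
    simp only [Matrix.mul_add, Matrix.add_mul, mul_assoc, rUtU, hU2, mul_one]
  have hY0 : (Uᵀ * (X * U)) * Dm + Dm * (Uᵀ * (X * U)) = 0 := by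
    rw [← hYeq, hXA, mul_zero, zero_mul]
  have hYzero : Uᵀ * (X * U) = 0 := by
    ext k l
    have h := congrFun (congrFun hY0 k) l
    rw [hDm] at h
    simp only [Matrix.add_apply, Matrix.mul_diagonal, Matrix.diagonal_mul,
      Matrix.zero_apply] at h
    have h2 : (lam k + lam l) * ((Uᵀ * (X * U)) k l) = 0 := by linear_combination h
    simpa using (mul_eq_zero.mp h2).resolve_left (hlamsum k l)
  have hXzero : X = 0 := by
    have hXc : U * ((Uᵀ * (X * U)) * Uᵀ) = X := by
      simp only [mul_assoc, rUUt]
      rw [hU1, mul_one]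
    rw [← hXc, hYzero, zero_mul, mul_zero]
  have hDzero : D = 0 := by
    have hDc : P * (X * P) = D := by
      rw [hX]
      simp only [mul_assoc, rPQ, hQP, mul_one]
    rw [← hDc, hXzero, zero_mul, mul_zero]
  rw [hDdef] at hDzero
  exact sub_eq_zero.mp hDzero
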